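/- With g_λ(w) = w·exp(2πi M_λ(w)), M_λ(w) = −(w−1)/((λ+πi)w−(λ−πi)), λ ∉ {±πi}: for each integer σ with 1 + (λ+πi)σ ≠ 0, the point w_σ* = (1 + (λ−πi)σ)/(1 + (λ+πi)σ) satisfies M_λ(w_σ*) = σ, hence g_λ(w_σ*) = w_σ*, and the multiplier is g_λ'(w_σ*) = 1 − (1 + (λ−πi)σ)(1 + (λ+πi)σ). -/

import Mathlib

theorem stmt9 (lam : ℂ) (h1 : lam ≠ (Real.pi : ℂ) * Complex.I)
    (h2 : lam ≠ -((Real.pi : ℂ) * Complex.I))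
    (σ : ℤ) (hσ : 1 + (lam + (Real.pi : ℂ) * Complex.I) * σ ≠ 0) :
    let pI : ℂ := (Real.pi : ℂ) * Complex.I
    let M : ℂ → ℂ := fun w => -(w - 1) / ((lam + pI) * w - (lam - pI))
    let g : ℂ → ℂ := fun w => w * Complex.exp (2 * pI * M w)
    let w' : ℂ := (1 + (lam - pI) * σ) / (1 + (lam + pI) * σ)
    M w' = σ ∧ g w' = w' ∧
      deriv g w' = 1 - (1 + (lam - pI) * σ) * (1 + (lam + pI) * σ) := by
  intro pI M g w'
  have hπ : (Real.pi : ℂ) ≠ 0 := by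
    simpa using Complex.ofReal_ne_zero.mpr Real.pi_ne_zero
  have hpI : pI ≠ 0 := mul_ne_zero hπ Complex.I_ne_zero
  have hσ' : 1 + (lam + pI) * (σ : ℂ) ≠ 0 := hσ
  have hσ'' : 1 + (σ : ℂ) * (lam + pI) ≠ 0 := by rw [mul_comm]; exact hσ'
  have hden : (lam + pI) * w' - (lam - pI) ≠ 0 := by
    have h : (lam + pI) * w' - (lam - pI) = 2 * pI / (1 + (lam + pI) * σ) := by
      show (lam + pI) * ((1 + (lam - pI) * σ) / (1 + (lam + pI) * σ)) - (lam - pI) = _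
      field_simp
      ring
    rw [h]
    exact div_ne_zero (mul_ne_zero two_ne_zero hpI) hσ
  have hM : M w' = σ := by
    show -(w' - 1) / ((lam + pI) * w' - (lam - pI)) = σ
    rw [div_eq_iff hden]
    show -((1 + (lam - pI) * σ) / (1 + (lam + pI) * σ) - 1) =
      (σ : ℂ) * ((lam + pI) * ((1 + (lam - pI) * σ) / (1 + (lam + pI) * σ)) - (lam - pI))
    field_simp
    ring
  have hexp1 : Complex.exp (2 * pI * M w') = 1 := by
    rw [hM]
    have : 2 * pI * (σ : ℂ) = (σ : ℂ) * (2 * Real.pi * Complex.I) := by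
      show 2 * ((Real.pi : ℂ) * Complex.I) * (σ : ℂ) = _
      ring
    rw [this, Complex.exp_int_mul_two_pi_mul_I]
  refine ⟨hM, ?_, ?_⟩
  · show w' * Complex.exp (2 * pI * M w') = w'
    rw [hexp1, mul_one]
  · -- derivative computation
    have hn : HasDerivAt (fun w : ℂ => -(w - 1)) (-1) w' :=
      (((hasDerivAt_id w').sub_const 1).neg)
    have hd : HasDerivAt (fun w : ℂ => (lam + pI) * w - (lam - pI)) (lam + pI) w' := by
      simpa using (((hasDerivAt_id w').const_mul (lam + pI)).sub_const (lam - pI))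
    have hM' : HasDerivAt M
        (((-1) * ((lam + pI) * w' - (lam - pI)) - -(w' - 1) * (lam + pI)) /
          ((lam + pI) * w' - (lam - pI)) ^ 2) w' := hn.div hd hden
    have hexp : HasDerivAt (fun w => Complex.exp (2 * pI * M w))
        (Complex.exp (2 * pI * M w') *
          (2 * pI * (((-1) * ((lam + pI) * w' - (lam - pI)) - -(w' - 1) * (lam + pI)) /
            ((lam + pI) * w' - (lam - pI)) ^ 2))) w' := (hM'.const_mul (2 * pI)).cexp
    have hg : HasDerivAt g
        (1 * Complex.exp (2 * pI * M w') + w' *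
          (Complex.exp (2 * pI * M w') *
            (2 * pI * (((-1) * ((lam + pI) * w' - (lam - pI)) - -(w' - 1) * (lam + pI)) /
              ((lam + pI) * w' - (lam - pI)) ^ 2)))) w' := (hasDerivAt_id w').mul hexp
    rw [hg.deriv, hexp1]
    show 1 * 1 + (1 + (lam - pI) * σ) / (1 + (lam + pI) * σ) *
        (1 * (2 * pI * (((-1) * ((lam + pI) * w' - (lam - pI)) - -(w' - 1) * (lam + pI)) /
          ((lam + pI) * w' - (lam - pI)) ^ 2))) =
        1 - (1 + (lam - pI) * σ) * (1 + (lam + pI) * σ)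
    have hDval : (lam + pI) * w' - (lam - pI) = 2 * pI / (1 + (lam + pI) * σ) := by
      show (lam + pI) * ((1 + (lam - pI) * σ) / (1 + (lam + pI) * σ)) - (lam - pI) = _
      field_simp
      ring
    have hw1 : w' - 1 = -(2 * pI * σ) / (1 + (lam + pI) * σ) := by
      show (1 + (lam - pI) * σ) / (1 + (lam + pI) * σ) - 1 = _
      field_simp
      ring
    rw [hDval, hw1]
    field_simp
    ring
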